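/- Define sequences C_I and C_P for h ≥ 2 by the recurrences C_I^h = C_P^{h−1} and C_P^h = (1/2)(C_I^{h−1} + C_P^{h−1} + f(h−1)), where f(x) = log₂(2^x + 2^{x−1} − 1), with base cases C_I^1 = C_P^1 = 0 and C_I^2 = C_P^2 = 0. Then for all h ≥ 3, C_P^{h−1} ≤ C_I^{h−1} + (h−2). -/
import Mathlib


noncomputable def fWEP (x : ℝ) : ℝ := Real.logb 2 ((2 : ℝ) ^ x + (2 : ℝ) ^ (x - 1) - 1)

lemma fWEP_bounds (x : ℝ) (hx : 1 ≤ x) : x - 1 ≤ fWEP x ∧ fWEP x ≤ x + 1 := by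
  have h1 : (0:ℝ) < (2:ℝ) ^ (x-1) := Real.rpow_pos_of_pos (by norm_num) _
  have h2 : (1:ℝ) ≤ (2:ℝ) ^ x := by
    have := Real.rpow_le_rpow_of_exponent_le (by norm_num : (1:ℝ) ≤ 2) (by linarith : (0:ℝ) ≤ x)
    simpa using this
  have h3 : (2:ℝ) ^ (x-1) ≤ (2:ℝ) ^ x :=
    Real.rpow_le_rpow_of_exponent_le (by norm_num) (by linarith)
  have hpos : (0:ℝ) < (2:ℝ) ^ x + (2:ℝ) ^ (x-1) - 1 := by linarith
  constructor
  · have := (Real.logb_le_logb (b := 2) (by norm_num) h1 hpos).mpr (by linarith)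
    rwa [Real.logb_rpow (by norm_num) (by norm_num)] at this
  · have hub : (2:ℝ) ^ x + (2:ℝ) ^ (x-1) - 1 ≤ (2:ℝ) ^ (x+1) := by
      have : (2:ℝ) ^ (x+1) = (2:ℝ)^x * 2 := by
        rw [Real.rpow_add (by norm_num), Real.rpow_one]
      linarith
    have := (Real.logb_le_logb (b := 2) (by norm_num) hpos
        (Real.rpow_pos_of_pos (by norm_num) _)).mpr hub
    rwa [Real.logb_rpow (by norm_num) (by norm_num)] at this

/-- With C_I and C_P defined by the recurrences
C_I^h = C_P^{h−1}, C_P^h = ½(C_I^{h−1} + C_P^{h−1} + f(h−1)), base cases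
C_I^1 = C_P^1 = C_I^2 = C_P^2 = 0, we have C_P^{h−1} ≤ C_I^{h−1} + (h−2) for all h ≥ 3. -/
theorem minep_inorder_ineq (CI CP : ℕ → ℝ)
    (hI1 : CI 1 = 0) (hP1 : CP 1 = 0) (hI2 : CI 2 = 0) (hP2 : CP 2 = 0)
    (hrecI : ∀ h : ℕ, 3 ≤ h → CI h = CP (h - 1))
    (hrecP : ∀ h : ℕ, 3 ≤ h → CP h = (1 / 2) * (CI (h - 1) + CP (h - 1) + fWEP ((h : ℝ) - 1))) :
    ∀ h : ℕ, 3 ≤ h → CP (h - 1) ≤ CI (h - 1) + ((h : ℝ) - 2) := by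
  have key : ∀ n : ℕ, 2 ≤ n → CP n ≤ CI n + ((n:ℝ) - 1) ∧ CI n ≤ CP n := by
    intro n hn
    induction n, hn using Nat.le_induction with
    | base => simp [hI2, hP2]
    | succ n hn ih =>
      have h3 : 3 ≤ n + 1 := by omega
      have hrI := hrecI (n+1) h3
      have hrP := hrecP (n+1) h3
      simp only [Nat.add_sub_cancel] at hrI hrP
      have hcast : ((n+1:ℕ):ℝ) - 1 = (n:ℝ) := by push_cast; ring
      rw [hcast] at hrP
      have hn' : (2:ℝ) ≤ (n:ℝ) := by exact_mod_cast hn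
      obtain ⟨hlb, hub⟩ := fWEP_bounds (n:ℝ) (by linarith)
      obtain ⟨ih1, ih2⟩ := ih
      constructor
      · rw [hrP, hrI]; push_cast; linarith
      · rw [hrP, hrI]; linarith
  intro h hh
  have hn : 2 ≤ h - 1 := by omega
  obtain ⟨h1, _⟩ := key (h-1) hn
  have : ((h - 1 : ℕ) : ℝ) = (h:ℝ) - 1 := by
    have : 1 ≤ h := by omega
    push_cast [this]; ring
  linarith [h1, this.symm ▸ h1]
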